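/- Let K be a nonempty compact convex subset of ℝ^d, and let m1, m2 : K → ℝ be continuous concave functions. Then sup_{p∈K} min{m1(p), m2(p)} = inf_{θ∈[0,1]} sup_{p∈K} ( θ·m1(p) + (1−θ)·m2(p) ). -/

import Mathlib

/-- min-max exchange for two continuous concave functions on a nonempty
compact convex subset of `ℝ^d`. -/
theorem stmt10 {d : ℕ} (K : Set (Fin d → ℝ)) (hKne : K.Nonempty) (hKcomp : IsCompact K)
    (hKconv : Convex ℝ K) (m1 m2 : (Fin d → ℝ) → ℝ)
    (hm1c : ContinuousOn m1 K) (hm2c : ContinuousOn m2 K)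
    (hm1 : ConcaveOn ℝ K m1) (hm2 : ConcaveOn ℝ K m2) :
    (⨆ p : K, min (m1 ↑p) (m2 ↑p)) =
      ⨅ θ : Set.Icc (0 : ℝ) 1, ⨆ p : K, ((θ : ℝ) * m1 ↑p + (1 - (θ : ℝ)) * m2 ↑p) := by
  classical
  obtain ⟨p₀, hp₀⟩ := hKne
  have hKne' : Nonempty K := ⟨⟨p₀, hp₀⟩⟩
  obtain ⟨M1, hM1⟩ := hKcomp.exists_bound_of_continuousOn hm1c
  obtain ⟨M2, hM2⟩ := hKcomp.exists_bound_of_continuousOn hm2c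
  set M : ℝ := max M1 M2 with hMdef
  have hM : ∀ p ∈ K, |m1 p| ≤ M ∧ |m2 p| ≤ M := fun p hp =>
    ⟨(hM1 p hp).trans (le_max_left _ _), (hM2 p hp).trans (le_max_right _ _)⟩
  -- bddAbove of the θ-family
  have hbd : ∀ θ ∈ Set.Icc (0:ℝ) 1, ∀ p : K, θ * m1 ↑p + (1 - θ) * m2 ↑p ≤ M := by
    intro θ hθ p
    obtain ⟨h1, h2⟩ := hM ↑p p.2
    have := abs_le.1 h1
    have := abs_le.1 h2
    nlinarith [hθ.1, hθ.2]
  have hbddA : ∀ θ ∈ Set.Icc (0:ℝ) 1,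
      BddAbove (Set.range fun p : K => θ * m1 ↑p + (1 - θ) * m2 ↑p) := by
    intro θ hθ
    exact ⟨M, Set.forall_mem_range.2 fun p => hbd θ hθ p⟩
  have hminbdd : BddAbove (Set.range fun p : K => min (m1 ↑p) (m2 ↑p)) := by
    refine ⟨M, Set.forall_mem_range.2 fun p => ?_⟩
    exact (min_le_left _ _).trans ((abs_le.1 (hM ↑p p.2).1).2)
  set S : ℝ := ⨆ p : K, min (m1 ↑p) (m2 ↑p) with hSdef
  have hmin_combo : ∀ θ ∈ Set.Icc (0:ℝ) 1, ∀ p : K,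
      min (m1 ↑p) (m2 ↑p) ≤ θ * m1 ↑p + (1 - θ) * m2 ↑p := by
    intro θ hθ p
    have h1 := min_le_left (m1 ↑p) (m2 ↑p)
    have h2 := min_le_right (m1 ↑p) (m2 ↑p)
    nlinarith [hθ.1, hθ.2]
  have hbddB : BddBelow (Set.range fun θ : Set.Icc (0:ℝ) 1 =>
      ⨆ p : K, (θ : ℝ) * m1 ↑p + (1 - (θ:ℝ)) * m2 ↑p) := by
    refine ⟨min (m1 p₀) (m2 p₀), Set.forall_mem_range.2 fun θ => ?_⟩
    exact (hmin_combo θ θ.2 ⟨p₀, hp₀⟩).trans (le_ciSup (hbddA θ θ.2) ⟨p₀, hp₀⟩)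
  refine le_antisymm ?_ ?_
  · -- easy direction
    refine le_ciInf fun θ => ciSup_le fun p => ?_
    exact (hmin_combo θ θ.2 p).trans (le_ciSup (hbddA θ θ.2) p)
  · -- hard direction via separation
    refine le_of_forall_pos_le_add fun ε hε => ?_
    set C : Set (ℝ × ℝ) := {xy | ∃ p ∈ K, xy.1 ≤ m1 p ∧ xy.2 ≤ m2 p} with hCdef
    have hCconv : Convex ℝ C := by
      rintro ⟨x1, y1⟩ ⟨p, hpK, hp1, hp2⟩ ⟨x2, y2⟩ ⟨q, hqK, hq1, hq2⟩ s t hs ht hst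
      refine ⟨s • p + t • q, hKconv hpK hqK hs ht hst, ?_, ?_⟩
      · have := hm1.2 hpK hqK hs ht hst
        simp only [smul_eq_mul] at this
        simp only [Prod.fst_add, Prod.smul_fst, smul_eq_mul]
        nlinarith
      · have := hm2.2 hpK hqK hs ht hst
        simp only [smul_eq_mul] at this
        simp only [Prod.snd_add, Prod.smul_snd, smul_eq_mul]
        nlinarith
    have hCclosed : IsClosed C := by
      apply IsSeqClosed.isClosed
      intro z l hz hl
      choose p hpK hp1 hp2 using hz
      obtain ⟨q, hqK, φ, hφ, hpq⟩ := hKcomp.tendsto_subseq hpK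
      refine ⟨q, hqK, ?_, ?_⟩
      · have h1 : Filter.Tendsto (fun n => m1 (p (φ n))) Filter.atTop (nhds (m1 q)) :=
          ((hm1c q hqK).tendsto).comp
            (tendsto_nhdsWithin_of_tendsto_nhds_of_eventually_within _ hpq
              (Filter.Eventually.of_forall fun n => hpK (φ n)))
        have h2 : Filter.Tendsto (fun n => (z (φ n)).1) Filter.atTop (nhds l.1) :=
          ((continuous_fst.tendsto l).comp hl).comp hφ.tendsto_atTop
        exact le_of_tendsto_of_tendsto h2 h1 (Filter.Eventually.of_forall fun n => hp1 (φ n))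
      · have h1 : Filter.Tendsto (fun n => m2 (p (φ n))) Filter.atTop (nhds (m2 q)) :=
          ((hm2c q hqK).tendsto).comp
            (tendsto_nhdsWithin_of_tendsto_nhds_of_eventually_within _ hpq
              (Filter.Eventually.of_forall fun n => hpK (φ n)))
        have h2 : Filter.Tendsto (fun n => (z (φ n)).2) Filter.atTop (nhds l.2) :=
          ((continuous_snd.tendsto l).comp hl).comp hφ.tendsto_atTop
        exact le_of_tendsto_of_tendsto h2 h1 (Filter.Eventually.of_forall fun n => hp2 (φ n))
    have hx₀ : ((S + ε, S + ε) : ℝ × ℝ) ∉ C := by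
      rintro ⟨p, hpK, h1, h2⟩
      have hle : min (m1 p) (m2 p) ≤ S := le_ciSup hminbdd ⟨p, hpK⟩
      have : S + ε ≤ min (m1 p) (m2 p) := le_min h1 h2
      linarith
    obtain ⟨f, u, hfu, hux⟩ := geometric_hahn_banach_closed_point hCconv hCclosed hx₀
    set a : ℝ := f (1, 0) with hadef
    set b : ℝ := f (0, 1) with hbdef
    have hf : ∀ x y : ℝ, f (x, y) = x * a + y * b := by
      intro x y
      have hxy : ((x, y) : ℝ × ℝ) = x • ((1:ℝ), (0:ℝ)) + y • ((0:ℝ), (1:ℝ)) := by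
        simp [Prod.ext_iff]
      rw [hxy, map_add, map_smul, map_smul, smul_eq_mul, smul_eq_mul]
    have ha : 0 ≤ a := by
      by_contra h
      push_neg at h
      set x : ℝ := min (m1 p₀) ((u - b * m2 p₀) / a) with hxdef
      have hx1 : x ≤ m1 p₀ := min_le_left _ _
      have hx2 : u - b * m2 p₀ ≤ a * x := by
        have hle : x ≤ (u - b * m2 p₀) / a := min_le_right _ _
        have := mul_le_mul_of_nonpos_left hle (le_of_lt h)
        rwa [mul_div_cancel₀ _ (ne_of_lt h)] at this
      have hmem : ((x, m2 p₀) : ℝ × ℝ) ∈ C := ⟨p₀, hp₀, hx1, le_refl _⟩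
      have := hfu _ hmem
      rw [hf] at this
      linarith
    have hb : 0 ≤ b := by
      by_contra h
      push_neg at h
      set y : ℝ := min (m2 p₀) ((u - a * m1 p₀) / b) with hydef
      have hy1 : y ≤ m2 p₀ := min_le_left _ _
      have hy2 : u - a * m1 p₀ ≤ b * y := by
        have hle : y ≤ (u - a * m1 p₀) / b := min_le_right _ _
        have := mul_le_mul_of_nonpos_left hle (le_of_lt h)
        rwa [mul_div_cancel₀ _ (ne_of_lt h)] at this
      have hmem : ((m1 p₀, y) : ℝ × ℝ) ∈ C := ⟨p₀, hp₀, le_refl _, hy1⟩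
      have := hfu _ hmem
      rw [hf] at this
      linarith
    have hux' : u < (S + ε) * a + (S + ε) * b := by rwa [hf] at hux
    have hab : 0 < a + b := by
      rcases lt_or_ge 0 (a + b) with h | h
      · exact h
      · exfalso
        have ha0 : a = 0 := le_antisymm (by linarith) ha
        have hb0 : b = 0 := le_antisymm (by linarith) hb
        have h1 := hfu _ (⟨p₀, hp₀, le_refl _, le_refl _⟩ :
          ((m1 p₀, m2 p₀) : ℝ × ℝ) ∈ C)
        rw [hf] at h1
        rw [ha0, hb0] at h1 hux'
        linarith
    set θ : ℝ := a / (a + b) with hθdef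
    have hθmem : θ ∈ Set.Icc (0:ℝ) 1 :=
      ⟨div_nonneg ha (le_of_lt hab), (div_le_one hab).2 (by linarith)⟩
    have key : ∀ p : K, θ * m1 ↑p + (1 - θ) * m2 ↑p ≤ S + ε := by
      intro p
      have hp := hfu _ (⟨↑p, p.2, le_refl _, le_refl _⟩ :
        ((m1 ↑p, m2 ↑p) : ℝ × ℝ) ∈ C)
      rw [hf] at hp
      have hrw : θ * m1 ↑p + (1 - θ) * m2 ↑p = (a * m1 ↑p + b * m2 ↑p) / (a + b) := by
        field_simp [hθdef]
        rw [hθdef]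
        field_simp
        ring
      rw [hrw, div_le_iff₀ hab]
      nlinarith
    exact (ciInf_le hbddB ⟨θ, hθmem⟩).trans (ciSup_le key)
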